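/- Let 0 < θ < π/2 and let ξ ∈ ℂ with |ξ| ≤ 1 and ξ ≠ 1. Then there exist real numbers ε > 0 and A > 0 such that for every y ∈ ℂ with either |y| ≤ ε or |arg y| ≤ θ, one has e^{Re(y)/2} ≤ A · |e^y − ξ| (equivalently |1/(e^y − ξ)| ≤ A·e^{−Re(y)/2}, and in particular e^y ≠ ξ on this set). (Lemma 3.6, case δ = 0.) -/

import Mathlib

open Complex Real

/-- Lemma 3.6, case `δ = 0`: for `0 < θ < π/2` and `ξ ∈ ℂ` with `|ξ| ≤ 1`,
`ξ ≠ 1`, there are `ε > 0` and `A > 0` such that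
`e^{Re(y)/2} ≤ A |e^y - ξ|` for all `y` in the closed disc of radius `ε`
around `0` and in the closed sector `|arg y| ≤ θ`. -/
theorem exists_bound_inv_exp_sub (θ : ℝ) (hθ0 : 0 < θ) (hθ : θ < π / 2)
    (ξ : ℂ) (hξ : ‖ξ‖ ≤ 1) (hξ1 : ξ ≠ 1) :
    ∃ ε > (0 : ℝ), ∃ A > (0 : ℝ), ∀ y : ℂ,
      (‖y‖ ≤ ε ∨ |y.arg| ≤ θ) →
      Real.exp (y.re / 2) ≤ A * ‖Complex.exp y - ξ‖ := by
  have hc : (0:ℝ) < ‖(1:ℂ) - ξ‖ := by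
    rw [norm_pos_iff, sub_ne_zero]
    exact fun h => hξ1 h.symm
  set c : ℝ := ‖(1:ℂ) - ξ‖ with hcdef
  have hcθ : 0 < Real.cos θ :=
    Real.cos_pos_of_mem_Ioo ⟨by linarith [Real.pi_pos], hθ⟩
  set ε : ℝ := min 1 (c/8) with hεdef
  have hε0 : 0 < ε := lt_min one_pos (by positivity)
  have hε1 : ε ≤ 1 := min_le_left _ _
  have hεc : ε ≤ c/8 := min_le_right _ _
  have he3 : Real.exp 1 < 3 := by
    have := Real.exp_one_lt_d9; linarith
  refine ⟨ε, hε0, 6/c + 3/(ε * Real.cos θ) + 2, by positivity, ?_⟩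
  intro y hy
  have hp1 : (0:ℝ) < 6/c := by positivity
  have hp2 : (0:ℝ) < 3/(ε * Real.cos θ) := by positivity
  have hA1 : 6/c ≤ 6/c + 3/(ε * Real.cos θ) + 2 := by linarith
  have hA2 : 3/(ε * Real.cos θ) ≤ 6/c + 3/(ε * Real.cos θ) + 2 := by linarith
  have hA3 : (2:ℝ) ≤ 6/c + 3/(ε * Real.cos θ) + 2 := by linarith
  -- Case: small disc
  by_cases hdisc : ‖y‖ ≤ ε
  · have hyr : y.re ≤ 1 := le_trans (le_trans (Complex.re_le_norm y) hdisc) hε1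
    have h1 : ‖Complex.exp y - 1‖ ≤ 2 * ‖y‖ := by
      have := Complex.norm_exp_sub_one_le (x := y) (le_trans hdisc hε1)
      simpa using this
    have hlow : c/2 ≤ ‖Complex.exp y - ξ‖ := by
      have htri : c ≤ ‖Complex.exp y - ξ‖ + ‖Complex.exp y - 1‖ := by
        calc c = ‖(Complex.exp y - ξ) - (Complex.exp y - 1)‖ := by ring_nf; exact hcdef
          _ ≤ ‖Complex.exp y - ξ‖ + ‖Complex.exp y - 1‖ := norm_sub_le _ _
      have : 2 * ‖y‖ ≤ c/4 := by
        have := le_trans hdisc hεc; linarith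
      linarith
    have hup : Real.exp (y.re/2) ≤ 3 := by
      have : Real.exp (y.re/2) ≤ Real.exp 1 := Real.exp_le_exp.mpr (by linarith)
      linarith
    calc Real.exp (y.re/2) ≤ 3 := hup
      _ = (6/c) * (c/2) := by field_simp; norm_num
      _ ≤ (6/c + 3/(ε * Real.cos θ) + 2) * ‖Complex.exp y - ξ‖ :=
          mul_le_mul hA1 hlow (by positivity) (by positivity)
  · -- sector case, ‖y‖ > ε
    have hsec : |y.arg| ≤ θ := hy.resolve_left hdisc
    have hyε : ε < ‖y‖ := not_le.mp hdisc
    have hy0 : y ≠ 0 := by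
      intro h; rw [h] at hyε; simp at hyε; linarith
    have hcosarg : Real.cos θ ≤ Real.cos y.arg := by
      rw [← Real.cos_abs y.arg]
      exact Real.cos_le_cos_of_nonneg_of_le_pi (abs_nonneg _)
        (by linarith [Real.pi_pos]) hsec
    have hre : ε * Real.cos θ ≤ y.re := by
      have h1 : Real.cos y.arg = y.re / ‖y‖ := Complex.cos_arg hy0
      have h2 : (‖y‖ : ℝ) = ‖y‖ := rfl
      have h3 : ‖y‖ * Real.cos θ ≤ ‖y‖ * Real.cos y.arg :=
        mul_le_mul_of_nonneg_left hcosarg (norm_nonneg _)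
      have hn : ‖y‖ ≠ 0 := ne_of_gt (lt_trans hε0 hyε)
      have h4 : ‖y‖ * Real.cos y.arg = y.re := by
        rw [h1, h2, mul_div_cancel₀ _ hn]
      have h5 : ε * Real.cos θ ≤ ‖y‖ * Real.cos θ :=
        mul_le_mul_of_nonneg_right hyε.le hcθ.le
      linarith
    have hlow0 : Real.exp y.re - 1 ≤ ‖Complex.exp y - ξ‖ := by
      have htri : ‖Complex.exp y‖ ≤ ‖Complex.exp y - ξ‖ + ‖ξ‖ := by
        calc ‖Complex.exp y‖ = ‖(Complex.exp y - ξ) + ξ‖ := by ring_nf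
          _ ≤ ‖Complex.exp y - ξ‖ + ‖ξ‖ := norm_add_le _ _
      have hnexp : ‖Complex.exp y‖ = Real.exp y.re := by rw [Complex.norm_exp]
      linarith
    by_cases hyr : y.re ≤ 1
    · have hup : Real.exp (y.re/2) ≤ 3 := by
        have : Real.exp (y.re/2) ≤ Real.exp 1 := Real.exp_le_exp.mpr (by linarith)
        linarith
      have hlow : ε * Real.cos θ ≤ ‖Complex.exp y - ξ‖ := by
        have := Real.add_one_le_exp y.re
        linarith
      calc Real.exp (y.re/2) ≤ 3 := hup
        _ = (3/(ε * Real.cos θ)) * (ε * Real.cos θ) := by field_simp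
        _ ≤ (6/c + 3/(ε * Real.cos θ) + 2) * ‖Complex.exp y - ξ‖ :=
            mul_le_mul hA2 hlow (by positivity) (by positivity)
    · have hr1 : (1:ℝ) ≤ y.re := le_of_not_ge hyr
      have hexp2 : (2:ℝ) ≤ Real.exp y.re := by
        have := Real.add_one_le_exp y.re; linarith
      have hhalf : Real.exp (y.re/2) ≤ Real.exp y.re :=
        Real.exp_le_exp.mpr (by linarith)
      have key : Real.exp (y.re/2) ≤ 2 * (Real.exp y.re - 1) := by linarith
      calc Real.exp (y.re/2) ≤ 2 * (Real.exp y.re - 1) := key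
        _ ≤ (6/c + 3/(ε * Real.cos θ) + 2) * ‖Complex.exp y - ξ‖ :=
            mul_le_mul hA3 hlow0 (by linarith) (by positivity)
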